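/- Let μ/ν be a skew Young diagram and let λ, λ' be partitions (dominant integer vectors) with λ ⪯ λ', meaning λ' − λ is a nonnegative integer combination of simple coroots e_i − e_{i+1} (equivalently λ' dominates λ in the dominance order with equal sums). Then the Kostka number K_{μ/ν}(λ') is at most K_{μ/ν}(λ). In particular, K_{μ/ν}(λ') ≠ 0 implies K_{μ/ν}(λ) ≠ 0. -/

import Mathlib

/-- A semistandard skew tableau of shape μ/ν: zero outside the shape, positive entries
on the shape, weakly increasing rows, strictly increasing columns. -/
def IsSkewSSYT (μ ν : ℕ → ℕ) (T : ℕ → ℕ → ℕ) : Prop :=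
  (∀ i j, ¬(ν i ≤ j ∧ j < μ i) → T i j = 0) ∧
  (∀ i j, ν i ≤ j → j < μ i → 1 ≤ T i j) ∧
  (∀ i j₁ j₂, ν i ≤ j₁ → j₁ ≤ j₂ → j₂ < μ i → T i j₁ ≤ T i j₂) ∧
  (∀ i j, ν i ≤ j → j < μ i → ν (i + 1) ≤ j → j < μ (i + 1) → T i j < T (i + 1) j)

/-- The tableau T has content lam: for each t ≥ 1 there are exactly lam t cells with
entry t. -/
def HasContent (μ ν : ℕ → ℕ) (T : ℕ → ℕ → ℕ) (lam : ℕ → ℕ) : Prop :=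
  ∀ t : ℕ, 1 ≤ t →
    {p : ℕ × ℕ | ν p.1 ≤ p.2 ∧ p.2 < μ p.1 ∧ T p.1 p.2 = t}.ncard = lam t

/-- The Kostka number K_{μ/ν}(lam). -/
noncomputable def Kostka (μ ν : ℕ → ℕ) (lam : ℕ → ℕ) : ℕ :=
  Nat.card {T : ℕ → ℕ → ℕ // IsSkewSSYT μ ν T ∧ HasContent μ ν T lam}

section Aux
variable (μ ν : ℕ → ℕ)

/-- The set of columns in row `k` holding entry `s`. -/
def rowS (T : ℕ → ℕ → ℕ) (k s : ℕ) : Finset ℕ :=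
  (Finset.range (μ 0)).filter (fun j => ν k ≤ j ∧ j < μ k ∧ T k j = s)

lemma mem_rowS {T : ℕ → ℕ → ℕ} {k s j : ℕ} (hμ : ∀ i, μ (i + 1) ≤ μ i) :
    j ∈ rowS μ ν T k s ↔ ν k ≤ j ∧ j < μ k ∧ T k j = s := by
  have hant : Antitone μ := antitone_nat_of_succ_le hμ
  constructor
  · intro h
    exact (Finset.mem_filter.1 h).2
  · intro h
    refine Finset.mem_filter.2 ⟨Finset.mem_range.2 ?_, h⟩
    exact lt_of_lt_of_le h.2.1 (hant (Nat.zero_le k))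

lemma content_eq_sum (hμ : ∀ i, μ (i + 1) ≤ μ i) (N : ℕ) (hN : ∀ i, N ≤ i → μ i = 0)
    (T : ℕ → ℕ → ℕ) (s : ℕ) :
    {p : ℕ × ℕ | ν p.1 ≤ p.2 ∧ p.2 < μ p.1 ∧ T p.1 p.2 = s}.ncard =
      ∑ k ∈ Finset.range N, (rowS μ ν T k s).card := by
  have hant : Antitone μ := antitone_nat_of_succ_le hμ
  set S : Finset (ℕ × ℕ) :=
    (Finset.range N).biUnion (fun k => (rowS μ ν T k s).image (fun j => (k, j))) with hS
  have hset : {p : ℕ × ℕ | ν p.1 ≤ p.2 ∧ p.2 < μ p.1 ∧ T p.1 p.2 = s} = ↑S := by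
    ext ⟨i, j⟩
    simp only [Set.mem_setOf_eq, hS, Finset.coe_biUnion, Finset.mem_coe, Finset.mem_biUnion,
      Finset.mem_image, Set.mem_iUnion, Finset.mem_range]
    constructor
    · rintro ⟨h1, h2, h3⟩
      have hiN : i < N := by
        by_contra hc
        have := hN i (le_of_not_gt hc)
        omega
      exact ⟨i, hiN, j, (mem_rowS μ ν hμ).2 ⟨h1, h2, h3⟩, rfl⟩
    · rintro ⟨k, hk, j', hj', hji⟩
      obtain ⟨rfl, rfl⟩ : k = i ∧ j' = j := Prod.mk.injEq _ _ _ _ ▸ hji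
      exact (mem_rowS μ ν hμ).1 hj'
  rw [hset, Set.ncard_coe_finset]
  rw [Finset.card_biUnion]
  · refine Finset.sum_congr rfl fun k _ => ?_
    exact Finset.card_image_of_injective _ (fun a b h => (Prod.mk.injEq _ _ _ _ ▸ h).2)
  · intro x _ y _ hxy
    simp only [Finset.disjoint_left, Finset.mem_image]
    rintro ⟨i, j⟩ ⟨j₁, _, h1⟩ ⟨j₂, _, h2⟩
    apply hxy
    have e1 : x = i := (Prod.mk.injEq _ _ _ _ ▸ h1).1
    have e2 : y = i := (Prod.mk.injEq _ _ _ _ ▸ h2).1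
    omega

end Aux

section Fin
variable (μ ν : ℕ → ℕ)

lemma content_set_finite (T : ℕ → ℕ → ℕ) (N : ℕ) (hμ : ∀ i, μ (i + 1) ≤ μ i)
    (hN : ∀ i, N ≤ i → μ i = 0) (s : ℕ) :
    {p : ℕ × ℕ | ν p.1 ≤ p.2 ∧ p.2 < μ p.1 ∧ T p.1 p.2 = s}.Finite := by
  have hant : Antitone μ := antitone_nat_of_succ_le hμ
  apply Set.Finite.subset ((Finset.range N ×ˢ Finset.range (μ 0)).finite_toSet)
  rintro ⟨i, j⟩ ⟨h1, h2, h3⟩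
  have h2' : j < μ i := h2
  simp only [Finset.coe_product, Set.mem_prod, Finset.mem_coe, Finset.mem_range]
  constructor
  · by_contra hc
    have := hN i (le_of_not_gt hc); omega
  · exact lt_of_lt_of_le h2' (hant (Nat.zero_le i))

lemma finite_tabs (hμ : ∀ i, μ (i + 1) ≤ μ i) (N : ℕ) (hN : ∀ i, N ≤ i → μ i = 0)
    (c : ℕ → ℕ) (B : ℕ) (hB : ∀ s, B ≤ s → c s = 0) :
    Finite {T : ℕ → ℕ → ℕ // IsSkewSSYT μ ν T ∧ HasContent μ ν T c} := by
  have hant : Antitone μ := antitone_nat_of_succ_le hμ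
  have hbound : ∀ (T : {T : ℕ → ℕ → ℕ // IsSkewSSYT μ ν T ∧ HasContent μ ν T c})
      (i j : ℕ), T.1 i j < B + 1 := by
    rintro ⟨T, ⟨hz, hpos, hrow, hcol⟩, hcont⟩ i j
    show T i j < B + 1
    by_cases hsh : ν i ≤ j ∧ j < μ i
    · set s := T i j with hs
      by_contra hc
      have hBs : B ≤ s := by omega
      have h0 : c s = 0 := hB s hBs
      have h1 : 1 ≤ s := hpos i j hsh.1 hsh.2
      have hfin := content_set_finite μ ν T N hμ hN s
      have hcnt := hcont s h1
      rw [h0] at hcnt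
      have : {p : ℕ × ℕ | ν p.1 ≤ p.2 ∧ p.2 < μ p.1 ∧ T p.1 p.2 = s} = ∅ :=
        (Set.ncard_eq_zero hfin).1 hcnt
      have : (i, j) ∈ ({} : Set (ℕ × ℕ)) := this ▸ ⟨hsh.1, hsh.2, rfl⟩
      exact this
    · simp [hz i j hsh]
  apply Finite.of_injective
    (f := fun T : {T : ℕ → ℕ → ℕ // IsSkewSSYT μ ν T ∧ HasContent μ ν T c} =>
      (fun p : Fin N × Fin (μ 0) => (⟨T.1 p.1 p.2, hbound T p.1 p.2⟩ : Fin (B + 1))))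
  rintro ⟨T₁, hT₁, hc₁⟩ ⟨T₂, hT₂, hc₂⟩ h
  refine Subtype.ext ?_
  funext i j
  show T₁ i j = T₂ i j
  by_cases hsh : ν i ≤ j ∧ j < μ i
  · have hiN : i < N := by
      by_contra hc
      have := hN i (le_of_not_gt hc); omega
    have hjμ : j < μ 0 := lt_of_lt_of_le hsh.2 (hant (Nat.zero_le i))
    have := congrFun h (⟨i, hiN⟩, ⟨j, hjμ⟩)
    exact congrArg Fin.val this
  · rw [hT₁.1 i j hsh, hT₂.1 i j hsh]

end Fin

namespace SK

variable (μ ν : ℕ → ℕ)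

/-- Signed prefix quantity for the bracketing rule on letters t, t+1. -/
def Wf (T : ℕ → ℕ → ℕ) (t k : ℕ) : ℤ :=
  (∑ i ∈ Finset.range (k + 1), ((rowS μ ν T i (t + 1)).card : ℤ)) -
    ∑ i ∈ Finset.range k, ((rowS μ ν T i t).card : ℤ)

def Mv (T : ℕ → ℕ → ℕ) (t N : ℕ) : ℤ :=
  ((Finset.range (N + 1)).image (Wf μ ν T t)).max' (Finset.nonempty_range_add_one.image _)

lemma argmax_ne (T : ℕ → ℕ → ℕ) (t N : ℕ) :
    ((Finset.range (N + 1)).filter (fun k => Wf μ ν T t k = Mv μ ν T t N)).Nonempty := by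
  obtain ⟨k, hk, hkeq⟩ := Finset.mem_image.1 (Finset.max'_mem _ (Finset.nonempty_range_add_one.image (Wf μ ν T t)))
  exact ⟨k, Finset.mem_filter.2 ⟨hk, hkeq⟩⟩

def iHigh (T : ℕ → ℕ → ℕ) (t N : ℕ) : ℕ :=
  (((Finset.range (N + 1)).filter (fun k => Wf μ ν T t k = Mv μ ν T t N))).max' (argmax_ne μ ν T t N)

def iLow (T : ℕ → ℕ → ℕ) (t N : ℕ) : ℕ :=
  (((Finset.range (N + 1)).filter (fun k => Wf μ ν T t k = Mv μ ν T t N))).min' (argmax_ne μ ν T t N)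

def jHigh (T : ℕ → ℕ → ℕ) (t N : ℕ) : ℕ :=
  WithBot.unbotD 0 (rowS μ ν T (iHigh μ ν T t N) t).max

def jLow (T : ℕ → ℕ → ℕ) (t N : ℕ) : ℕ :=
  WithTop.untopD 0 (rowS μ ν T (iLow μ ν T t N) (t + 1)).min

def Fmap (T : ℕ → ℕ → ℕ) (t N : ℕ) : ℕ → ℕ → ℕ :=
  fun i j => if i = iHigh μ ν T t N ∧ j = jHigh μ ν T t N then t + 1 else T i j

def Gmap (T : ℕ → ℕ → ℕ) (t N : ℕ) : ℕ → ℕ → ℕ :=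
  fun i j => if i = iLow μ ν T t N ∧ j = jLow μ ν T t N then t else T i j

lemma rowS_empty {T : ℕ → ℕ → ℕ} {k : ℕ} (hk : μ k = 0) (s : ℕ) : rowS μ ν T k s = ∅ := by
  apply Finset.filter_false_of_mem
  intro j _ hj
  omega

lemma Wf_succ (T : ℕ → ℕ → ℕ) (t k : ℕ) :
    Wf μ ν T t (k + 1) =
      Wf μ ν T t k + (rowS μ ν T (k + 1) (t + 1)).card - (rowS μ ν T k t).card := by
  unfold Wf
  rw [Finset.sum_range_succ (fun i => ((rowS μ ν T i (t + 1)).card : ℤ)) (k + 1),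
    Finset.sum_range_succ (fun i => ((rowS μ ν T i t).card : ℤ)) k]
  ring

lemma Wf_const (T : ℕ → ℕ → ℕ) (t N : ℕ) (hN : ∀ i, N ≤ i → μ i = 0) :
    ∀ k, N ≤ k → Wf μ ν T t k = Wf μ ν T t N := by
  intro k hk
  induction k, hk using Nat.le_induction with
  | base => rfl
  | succ k hk ih =>
    rw [Wf_succ, ih, rowS_empty μ ν (hN (k+1) (by omega)), rowS_empty μ ν (hN k hk)]
    simp

lemma Wf_le_Mv (T : ℕ → ℕ → ℕ) (t N : ℕ) (hN : ∀ i, N ≤ i → μ i = 0) :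
    ∀ k, Wf μ ν T t k ≤ Mv μ ν T t N := by
  intro k
  rcases le_or_gt k N with h | h
  · exact Finset.le_max' _ _ (Finset.mem_image_of_mem _ (Finset.mem_range.2 (by omega)))
  · rw [Wf_const μ ν T t N hN k (by omega)]
    exact Finset.le_max' _ _ (Finset.mem_image_of_mem _ (Finset.mem_range.2 (by omega)))


variable (μ ν : ℕ → ℕ)

lemma sel_spec (hμ : ∀ i, μ (i + 1) ≤ μ i) (hν : ∀ i, ν (i + 1) ≤ ν i)
    (N : ℕ) (hN : ∀ i, N ≤ i → μ i = 0) {T : ℕ → ℕ → ℕ} {c : ℕ → ℕ}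
    (hT : IsSkewSSYT μ ν T) (hcont : HasContent μ ν T c) (t : ℕ) (ht : 1 ≤ t)
    (hct : c (t + 1) < c t) :
    (ν (iHigh μ ν T t N) ≤ jHigh μ ν T t N ∧ jHigh μ ν T t N < μ (iHigh μ ν T t N) ∧
      T (iHigh μ ν T t N) (jHigh μ ν T t N) = t) ∧
    (∀ j, ν (iHigh μ ν T t N) ≤ j → j < μ (iHigh μ ν T t N) →
      T (iHigh μ ν T t N) j = t → j ≤ jHigh μ ν T t N) ∧
    (¬(ν (iHigh μ ν T t N + 1) ≤ jHigh μ ν T t N ∧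
      jHigh μ ν T t N < μ (iHigh μ ν T t N + 1) ∧
      T (iHigh μ ν T t N + 1) (jHigh μ ν T t N) = t + 1)) ∧
    iHigh μ ν T t N ≤ N ∧
    Wf μ ν T t (iHigh μ ν T t N) = Mv μ ν T t N ∧
    (∀ k, k ≤ N → iHigh μ ν T t N < k → Wf μ ν T t k ≠ Mv μ ν T t N) := by
  obtain ⟨hz, hpos, hrow, hcol⟩ := hT
  set iH := iHigh μ ν T t N with hiH
  have hmem := Finset.max'_mem _ (argmax_ne μ ν T t N)
  have hiH_def : iH = ((Finset.range (N + 1)).filter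
      (fun k => Wf μ ν T t k = Mv μ ν T t N)).max' (argmax_ne μ ν T t N) := rfl
  rw [← hiH_def, Finset.mem_filter, Finset.mem_range] at hmem
  obtain ⟨hiHN, hiW⟩ := hmem
  have hsum_a : ∑ k ∈ Finset.range N, (rowS μ ν T k t).card = c t :=
    (content_eq_sum μ ν hμ N hN T t).symm.trans (hcont t ht)
  have hsum_b : ∑ k ∈ Finset.range N, (rowS μ ν T k (t + 1)).card = c (t + 1) :=
    (content_eq_sum μ ν hμ N hN T (t + 1)).symm.trans (hcont (t + 1) (by omega))
  have hca : (∑ k ∈ Finset.range N, ((rowS μ ν T k t).card : ℤ)) = (c t : ℤ) := by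
    exact_mod_cast congrArg (Nat.cast (R := ℤ)) hsum_a
  have hcb : (∑ k ∈ Finset.range N, ((rowS μ ν T k (t + 1)).card : ℤ)) = (c (t + 1) : ℤ) := by
    exact_mod_cast congrArg (Nat.cast (R := ℤ)) hsum_b
  have hWN : Wf μ ν T t N = (c (t + 1) : ℤ) - c t := by
    unfold Wf
    rw [Finset.sum_range_succ, rowS_empty μ ν (hN N le_rfl), hca, hcb]
    simp
  have hMv0 : (0 : ℤ) ≤ Mv μ ν T t N := by
    have h0 : (0 : ℤ) ≤ Wf μ ν T t 0 := by
      unfold Wf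
      simp
    exact le_trans h0 (Wf_le_Mv μ ν T t N hN 0)
  have hiHneN : iH ≠ N := by
    intro h
    rw [h, hWN] at hiW
    omega
  have hnot : Wf μ ν T t (iH + 1) ≠ Mv μ ν T t N := by
    intro h
    have hmem2 : iH + 1 ∈ (Finset.range (N + 1)).filter
        (fun k => Wf μ ν T t k = Mv μ ν T t N) :=
      Finset.mem_filter.2 ⟨Finset.mem_range.2 (by omega), h⟩
    have := Finset.le_max' _ _ hmem2
    rw [← hiH_def] at this
    omega
  have hWstep : Wf μ ν T t (iH + 1) ≤ Mv μ ν T t N - 1 := by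
    have := Wf_le_Mv μ ν T t N hN (iH + 1)
    omega
  have hba : (rowS μ ν T (iH + 1) (t + 1)).card + 1 ≤ (rowS μ ν T iH t).card := by
    have hs := Wf_succ μ ν T t iH
    rw [hiW] at hs
    have : ((rowS μ ν T (iH + 1) (t + 1)).card : ℤ) + 1 ≤ ((rowS μ ν T iH t).card : ℤ) := by
      omega
    exact_mod_cast this
  have hane : (rowS μ ν T iH t).Nonempty := Finset.card_pos.1 (by omega)
  have hjH : jHigh μ ν T t N = (rowS μ ν T iH t).max' hane := by
    unfold jHigh
    rw [← Finset.coe_max' hane]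
    rfl
  have hjmem : jHigh μ ν T t N ∈ rowS μ ν T iH t := hjH ▸ Finset.max'_mem _ hane
  obtain ⟨hj1, hj2, hj3⟩ := (mem_rowS μ ν hμ).1 hjmem
  have hub : ∀ j, ν iH ≤ j → j < μ iH → T iH j = t → j ≤ jHigh μ ν T t N := by
    intro j h1 h2 h3
    have : j ∈ rowS μ ν T iH t := (mem_rowS μ ν hμ).2 ⟨h1, h2, h3⟩
    have := Finset.le_max' _ _ this
    omega
  refine ⟨⟨hj1, hj2, hj3⟩, hub, ?_, by omega, hiW, ?_⟩
  swap
  · intro k hk hik h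
    have hmem2 : k ∈ (Finset.range (N + 1)).filter
        (fun k => Wf μ ν T t k = Mv μ ν T t N) :=
      Finset.mem_filter.2 ⟨Finset.mem_range.2 (by omega), h⟩
    have := Finset.le_max' _ _ hmem2
    rw [← hiH_def] at this
    omega
  rintro ⟨hb1, hb2, hb3⟩
  have hsub : rowS μ ν T iH t ⊆ rowS μ ν T (iH + 1) (t + 1) := by
    intro j hj
    obtain ⟨hk1, hk2, hk3⟩ := (mem_rowS μ ν hμ).1 hj
    have hjle : j ≤ jHigh μ ν T t N := hub j hk1 hk2 hk3
    have hsh1 : ν (iH + 1) ≤ j := le_trans (hν iH) hk1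
    have hsh2 : j < μ (iH + 1) := lt_of_le_of_lt hjle hb2
    refine (mem_rowS μ ν hμ).2 ⟨hsh1, hsh2, ?_⟩
    have hlow : t < T (iH + 1) j := hk3 ▸ hcol iH j hk1 hk2 hsh1 hsh2
    have hup : T (iH + 1) j ≤ t + 1 := hb3 ▸ hrow (iH + 1) j (jHigh μ ν T t N) hsh1 hjle hb2
    omega
  have := Finset.card_le_card hsub
  omega


variable (μ ν : ℕ → ℕ)

lemma Fmap_SSYT (hμ : ∀ i, μ (i + 1) ≤ μ i) (hν : ∀ i, ν (i + 1) ≤ ν i)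
    (N : ℕ) (hN : ∀ i, N ≤ i → μ i = 0) {T : ℕ → ℕ → ℕ} {c : ℕ → ℕ}
    (hT : IsSkewSSYT μ ν T) (hcont : HasContent μ ν T c) (t : ℕ) (ht : 1 ≤ t)
    (hct : c (t + 1) < c t) :
    IsSkewSSYT μ ν (Fmap μ ν T t N) := by
  obtain ⟨⟨hj1, hj2, hj3⟩, hub, hfree, hiHN, hiHW, hgtW⟩ := sel_spec μ ν hμ hν N hN hT hcont t ht hct
  obtain ⟨hz, hpos, hrow, hcol⟩ := hT
  set iH := iHigh μ ν T t N with hiH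
  set jH := jHigh μ ν T t N with hjH
  have hS2 : ∀ j, jH < j → j < μ iH → t + 1 ≤ T iH j := by
    intro j hgt hlt
    have hν' : ν iH ≤ j := le_trans hj1 (le_of_lt hgt)
    have h1 : t ≤ T iH j := hj3 ▸ hrow iH jH j hj1 (le_of_lt hgt) hlt
    rcases eq_or_lt_of_le h1 with he | hlt2
    · exact absurd (hub j hν' hlt he.symm) (by omega)
    · omega
  have hFv : ∀ i j, Fmap μ ν T t N i j = if i = iH ∧ j = jH then t + 1 else T i j := fun i j => rfl
  refine ⟨?_, ?_, ?_, ?_⟩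
  · intro i j hn
    rw [hFv]
    by_cases hc : i = iH ∧ j = jH
    · exact absurd (hc.1 ▸ hc.2 ▸ ⟨hj1, hj2⟩ : ν i ≤ j ∧ j < μ i) hn
    · rw [if_neg hc]; exact hz i j hn
  · intro i j h1 h2
    rw [hFv]
    by_cases hc : i = iH ∧ j = jH
    · rw [if_pos hc]; omega
    · rw [if_neg hc]; exact hpos i j h1 h2
  · intro i j₁ j₂ h1 hle h2
    rw [hFv, hFv]
    by_cases hc1 : i = iH ∧ j₁ = jH
    · rw [if_pos hc1]
      by_cases hc2 : i = iH ∧ j₂ = jH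
      · rw [if_pos hc2]
      · rw [if_neg hc2]
        obtain ⟨rfl, rfl⟩ := hc1
        have hne : j₂ ≠ jH := fun h => hc2 ⟨rfl, h⟩
        exact hS2 j₂ (by omega) h2
    · rw [if_neg hc1]
      by_cases hc2 : i = iH ∧ j₂ = jH
      · obtain ⟨rfl, rfl⟩ := hc2
        rw [if_pos ⟨rfl, rfl⟩]
        have : T iH j₁ ≤ T iH jH := hrow iH j₁ jH h1 hle h2
        omega
      · rw [if_neg hc2]; exact hrow i j₁ j₂ h1 hle h2
  · intro i j h1 h2 h3 h4
    rw [hFv, hFv]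
    by_cases hc1 : i = iH ∧ j = jH
    · rw [if_pos hc1]
      obtain ⟨rfl, rfl⟩ := hc1
      have hc2 : ¬(iH + 1 = iH ∧ jH = jH) := by omega
      rw [if_neg hc2]
      have hlow : t < T (iH + 1) jH := hj3 ▸ hcol iH jH h1 h2 h3 h4
      have hne : T (iH + 1) jH ≠ t + 1 := fun h => hfree ⟨h3, h4, h⟩
      omega
    · rw [if_neg hc1]
      by_cases hc2 : i + 1 = iH ∧ j = jH
      · rw [if_pos hc2]
        obtain ⟨hi, rfl⟩ := hc2
        have : T i jH < T (i + 1) jH := hcol i jH h1 h2 h3 h4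
        rw [hi] at this
        omega
      · rw [if_neg hc2]; exact hcol i j h1 h2 h3 h4

lemma Fmap_content (hμ : ∀ i, μ (i + 1) ≤ μ i) (hν : ∀ i, ν (i + 1) ≤ ν i)
    (N : ℕ) (hN : ∀ i, N ≤ i → μ i = 0) {T : ℕ → ℕ → ℕ} {c : ℕ → ℕ}
    (hT : IsSkewSSYT μ ν T) (hcont : HasContent μ ν T c) (t : ℕ) (ht : 1 ≤ t)
    (hct : c (t + 1) < c t) :
    HasContent μ ν (Fmap μ ν T t N)
      (fun s => if s = t then c t - 1 else if s = t + 1 then c (t + 1) + 1 else c s) := by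
  obtain ⟨⟨hj1, hj2, hj3⟩, hub, hfree, hiHN, hiHW, hgtW⟩ := sel_spec μ ν hμ hν N hN hT hcont t ht hct
  set iH := iHigh μ ν T t N with hiH
  set jH := jHigh μ ν T t N with hjH
  have hFv : ∀ i j, Fmap μ ν T t N i j = if i = iH ∧ j = jH then t + 1 else T i j :=
    fun i j => rfl
  intro s hs
  have hfin := content_set_finite μ ν T N hμ hN s
  by_cases hst : s = t
  · have hsetEq : {p : ℕ × ℕ | ν p.1 ≤ p.2 ∧ p.2 < μ p.1 ∧ Fmap μ ν T t N p.1 p.2 = s} =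
        {p : ℕ × ℕ | ν p.1 ≤ p.2 ∧ p.2 < μ p.1 ∧ T p.1 p.2 = s} \ {(iH, jH)} := by
      ext ⟨i, j⟩
      simp only [Set.mem_setOf_eq, Set.mem_diff, Set.mem_singleton_iff, hFv, Prod.mk.injEq]
      by_cases hc : i = iH ∧ j = jH
      · rw [if_pos hc]
        constructor
        · rintro ⟨-, -, h⟩; omega
        · rintro ⟨-, h⟩; exact absurd hc h
      · rw [if_neg hc]
        constructor
        · rintro ⟨a, b, d⟩; exact ⟨⟨a, b, d⟩, fun h => hc h⟩
        · rintro ⟨⟨a, b, d⟩, -⟩; exact ⟨a, b, d⟩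
    have hmem : (iH, jH) ∈ {p : ℕ × ℕ | ν p.1 ≤ p.2 ∧ p.2 < μ p.1 ∧ T p.1 p.2 = s} :=
      ⟨hj1, hj2, show T iH jH = s by omega⟩
    rw [hsetEq, Set.ncard_diff_singleton_of_mem hmem, hcont s hs]
    simp [hst]
  · by_cases hst1 : s = t + 1
    · have hsetEq : {p : ℕ × ℕ | ν p.1 ≤ p.2 ∧ p.2 < μ p.1 ∧ Fmap μ ν T t N p.1 p.2 = s} =
          insert (iH, jH) {p : ℕ × ℕ | ν p.1 ≤ p.2 ∧ p.2 < μ p.1 ∧ T p.1 p.2 = s} := by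
        ext ⟨i, j⟩
        simp only [Set.mem_setOf_eq, Set.mem_insert_iff, hFv, Prod.mk.injEq]
        by_cases hc : i = iH ∧ j = jH
        · rw [if_pos hc]
          obtain ⟨rfl, rfl⟩ := hc
          exact ⟨fun _ => Or.inl ⟨rfl, rfl⟩, fun _ => ⟨hj1, hj2, by omega⟩⟩
        · rw [if_neg hc]
          constructor
          · rintro ⟨a, b, d⟩; exact Or.inr ⟨a, b, d⟩
          · rintro (h | ⟨a, b, d⟩)
            · exact absurd h hc
            · exact ⟨a, b, d⟩
      have hnm : (iH, jH) ∉ {p : ℕ × ℕ | ν p.1 ≤ p.2 ∧ p.2 < μ p.1 ∧ T p.1 p.2 = s} := by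
        rintro ⟨-, -, h⟩
        have h' : T iH jH = s := h
        omega
      rw [hsetEq, Set.ncard_insert_of_notMem hnm hfin, hcont s hs]
      simp [hst1, show (t : ℕ) + 1 ≠ t by omega]
    · have hsetEq : {p : ℕ × ℕ | ν p.1 ≤ p.2 ∧ p.2 < μ p.1 ∧ Fmap μ ν T t N p.1 p.2 = s} =
          {p : ℕ × ℕ | ν p.1 ≤ p.2 ∧ p.2 < μ p.1 ∧ T p.1 p.2 = s} := by
        ext ⟨i, j⟩
        simp only [Set.mem_setOf_eq, hFv]
        by_cases hc : i = iH ∧ j = jH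
        · rw [if_pos hc]
          obtain ⟨rfl, rfl⟩ := hc
          constructor
          · rintro ⟨-, -, h⟩; omega
          · rintro ⟨-, -, h⟩; omega
        · rw [if_neg hc]
      rw [hsetEq, hcont s hs]
      simp [hst, hst1]

lemma Gmap_Fmap (hμ : ∀ i, μ (i + 1) ≤ μ i) (hν : ∀ i, ν (i + 1) ≤ ν i)
    (N : ℕ) (hN : ∀ i, N ≤ i → μ i = 0) {T : ℕ → ℕ → ℕ} {c : ℕ → ℕ}
    (hT : IsSkewSSYT μ ν T) (hcont : HasContent μ ν T c) (t : ℕ) (ht : 1 ≤ t)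
    (hct : c (t + 1) < c t) :
    Gmap μ ν (Fmap μ ν T t N) t N = T := by
  obtain ⟨⟨hj1, hj2, hj3⟩, hub, hfree, hiHN, hiHW, hgtW⟩ :=
    sel_spec μ ν hμ hν N hN hT hcont t ht hct
  obtain ⟨hz, hpos, hrow, hcol⟩ := hT
  set iH := iHigh μ ν T t N with hiH
  set jH := jHigh μ ν T t N with hjH
  set T' := Fmap μ ν T t N with hT'
  have hFv : ∀ i j, T' i j = if i = iH ∧ j = jH then t + 1 else T i j := fun i j => rfl
  have hjmem : jH ∈ rowS μ ν T iH t := (mem_rowS μ ν hμ).2 ⟨hj1, hj2, hj3⟩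
  have hvjH : T' iH jH = t + 1 := by rw [hFv, if_pos ⟨rfl, rfl⟩]
  have hvne : ∀ i j, ¬(i = iH ∧ j = jH) → T' i j = T i j := fun i j h => by
    rw [hFv, if_neg h]
  -- row sets of T'
  have hr1 : ∀ k, k ≠ iH → ∀ s', rowS μ ν T' k s' = rowS μ ν T k s' := by
    intro k hk s'
    unfold rowS
    apply Finset.filter_congr
    intro j _
    simp only [hFv]
    rw [if_neg (by tauto)]
  have hr2 : rowS μ ν T' iH t = (rowS μ ν T iH t).erase jH := by
    ext j
    rw [Finset.mem_erase, mem_rowS μ ν hμ, mem_rowS μ ν hμ]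
    by_cases hc : j = jH
    · subst hc
      rw [hvjH]
      constructor
      · rintro ⟨-, -, h⟩; omega
      · rintro ⟨h, -⟩; omega
    · rw [hvne iH j (by tauto)]
      constructor
      · rintro ⟨h1, h2, h3⟩; exact ⟨hc, h1, h2, h3⟩
      · rintro ⟨-, h1, h2, h3⟩; exact ⟨h1, h2, h3⟩
  have hr3 : rowS μ ν T' iH (t + 1) = insert jH (rowS μ ν T iH (t + 1)) := by
    ext j
    rw [Finset.mem_insert, mem_rowS μ ν hμ, mem_rowS μ ν hμ]
    by_cases hc : j = jH
    · subst hc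
      rw [hvjH]
      exact ⟨fun _ => Or.inl rfl, fun _ => ⟨hj1, hj2, rfl⟩⟩
    · rw [hvne iH j (by tauto)]
      constructor
      · rintro ⟨h1, h2, h3⟩; exact Or.inr ⟨h1, h2, h3⟩
      · rintro (h | ⟨h1, h2, h3⟩)
        · exact absurd h hc
        · exact ⟨h1, h2, h3⟩
  have hjnm : jH ∉ rowS μ ν T iH (t + 1) := by
    intro h
    have := (mem_rowS μ ν hμ).1 h
    omega
  have hapos : 1 ≤ (rowS μ ν T iH t).card := Finset.card_pos.2 ⟨jH, hjmem⟩
  have hcard2 : (rowS μ ν T' iH t).card = (rowS μ ν T iH t).card - 1 := by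
    rw [hr2, Finset.card_erase_of_mem hjmem]
  have hcard3 : (rowS μ ν T' iH (t + 1)).card = (rowS μ ν T iH (t + 1)).card + 1 := by
    rw [hr3, Finset.card_insert_of_notMem hjnm]
  -- W values of T'
  have hW'lt : ∀ k, k < iH → Wf μ ν T' t k = Wf μ ν T t k := by
    intro k hk
    unfold Wf
    congr 1
    · exact Finset.sum_congr rfl fun x hx => by
        rw [hr1 x (by have := Finset.mem_range.1 hx; omega)]
    · exact Finset.sum_congr rfl fun x hx => by
        rw [hr1 x (by have := Finset.mem_range.1 hx; omega)]
  have hbsum : ∀ m, iH < m →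
      (∑ x ∈ Finset.range m, ((rowS μ ν T' x (t + 1)).card : ℤ)) =
      (∑ x ∈ Finset.range m, ((rowS μ ν T x (t + 1)).card : ℤ)) + 1 := by
    intro m hm
    have hdiff : ∑ x ∈ Finset.range m,
        (((rowS μ ν T' x (t + 1)).card : ℤ) - ((rowS μ ν T x (t + 1)).card : ℤ)) = 1 := by
      rw [Finset.sum_eq_single iH]
      · rw [hcard3]; push_cast; ring
      · intro x _ hx
        rw [hr1 x hx]; ring
      · intro h
        exact absurd (Finset.mem_range.2 hm) h
    rw [Finset.sum_sub_distrib] at hdiff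
    omega
  have hasum : ∀ m, iH < m →
      (∑ x ∈ Finset.range m, ((rowS μ ν T' x t).card : ℤ)) =
      (∑ x ∈ Finset.range m, ((rowS μ ν T x t).card : ℤ)) - 1 := by
    intro m hm
    have hdiff : ∑ x ∈ Finset.range m,
        (((rowS μ ν T' x t).card : ℤ) - ((rowS μ ν T x t).card : ℤ)) = -1 := by
      rw [Finset.sum_eq_single iH]
      · rw [hcard2]
        have : ((rowS μ ν T iH t).card - 1 : ℕ) = ((rowS μ ν T iH t).card : ℤ) - 1 := by
          omega
        rw [this]; ring
      · intro x _ hx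
        rw [hr1 x hx]; ring
      · intro h
        exact absurd (Finset.mem_range.2 hm) h
    rw [Finset.sum_sub_distrib] at hdiff
    omega
  have hW'iH : Wf μ ν T' t iH = Mv μ ν T t N + 1 := by
    unfold Wf
    rw [hbsum (iH + 1) (by omega)]
    have ha : (∑ x ∈ Finset.range iH, ((rowS μ ν T' x t).card : ℤ)) =
        ∑ x ∈ Finset.range iH, ((rowS μ ν T x t).card : ℤ) :=
      Finset.sum_congr rfl fun x hx => by
        rw [hr1 x (by have := Finset.mem_range.1 hx; omega)]
    rw [ha, ← hiHW]
    unfold Wf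
    ring
  have hW'gt : ∀ k, iH < k → Wf μ ν T' t k = Wf μ ν T t k + 2 := by
    intro k hk
    unfold Wf
    rw [hbsum (k + 1) (by omega), hasum k hk]
    ring
  -- the maximum for T'
  have hMle : ∀ k, Wf μ ν T t k ≤ Mv μ ν T t N := Wf_le_Mv μ ν T t N hN
  have hM' : Mv μ ν T' t N = Mv μ ν T t N + 1 := by
    apply le_antisymm
    · obtain ⟨k₀, hk₀, hk₀eq⟩ := Finset.mem_image.1
        (Finset.max'_mem ((Finset.range (N + 1)).image (Wf μ ν T' t))
          (Finset.nonempty_range_add_one.image (Wf μ ν T' t)))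
      have hk₀N : k₀ ≤ N := by have := Finset.mem_range.1 hk₀; omega
      have hMveq : Mv μ ν T' t N = Wf μ ν T' t k₀ := hk₀eq.symm
      rw [hMveq]
      rcases lt_trichotomy k₀ iH with h | h | h
      · rw [hW'lt k₀ h]
        have := hMle k₀; omega
      · rw [h, hW'iH]
      · rw [hW'gt k₀ h]
        have h1 := hMle k₀
        have h2 := hgtW k₀ hk₀N h
        omega
    · have : Wf μ ν T' t iH ≤ Mv μ ν T' t N := Wf_le_Mv μ ν T' t N hN iH
      omega
  have hiLow : iLow μ ν T' t N = iH := by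
    have hmemH : iH ∈ (Finset.range (N + 1)).filter
        (fun k => Wf μ ν T' t k = Mv μ ν T' t N) :=
      Finset.mem_filter.2 ⟨Finset.mem_range.2 (by omega), by rw [hW'iH, hM']⟩
    have hle : iLow μ ν T' t N ≤ iH := Finset.min'_le _ _ hmemH
    have hmemL := Finset.min'_mem _ (argmax_ne μ ν T' t N)
    have hiLow_def : iLow μ ν T' t N = ((Finset.range (N + 1)).filter
        (fun k => Wf μ ν T' t k = Mv μ ν T' t N)).min' (argmax_ne μ ν T' t N) := rfl
    rw [← hiLow_def, Finset.mem_filter, Finset.mem_range] at hmemL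
    obtain ⟨h1, h2⟩ := hmemL
    have hge : iH ≤ iLow μ ν T' t N := by
      by_contra hcon
      push_neg at hcon
      rw [hW'lt _ hcon, hM'] at h2
      have := hMle (iLow μ ν T' t N)
      omega
    omega
  have hjLow : jLow μ ν T' t N = jH := by
    unfold jLow
    rw [hiLow, hr3]
    have hne : (insert jH (rowS μ ν T iH (t + 1))).Nonempty := Finset.insert_nonempty _ _
    rw [← Finset.coe_min' hne]
    have hminj : (insert jH (rowS μ ν T iH (t + 1))).min' hne = jH := by
      apply le_antisymm
      · exact Finset.min'_le _ _ (Finset.mem_insert_self _ _)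
      · apply Finset.le_min'
        intro y hy
        rcases Finset.mem_insert.1 hy with h | h
        · omega
        · obtain ⟨hy1, hy2, hy3⟩ := (mem_rowS μ ν hμ).1 h
          by_contra hcon
          push_neg at hcon
          have : T iH y ≤ T iH jH := hrow iH y jH hy1 (by omega) hj2
          omega
    rw [hminj]
    rfl
  -- conclude
  funext i j
  have hGv : Gmap μ ν T' t N i j =
      if i = iLow μ ν T' t N ∧ j = jLow μ ν T' t N then t else T' i j := rfl
  rw [hGv, hiLow, hjLow]
  by_cases hc : i = iH ∧ j = jH
  · rw [if_pos hc]
    obtain ⟨rfl, rfl⟩ := hc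
    omega
  · rw [if_neg hc, hFv, if_neg hc]


lemma step_le (hμ : ∀ i, μ (i + 1) ≤ μ i) (hν : ∀ i, ν (i + 1) ≤ ν i)
    (N : ℕ) (hN : ∀ i, N ≤ i → μ i = 0) (c : ℕ → ℕ) (hcN : ∀ s, N ≤ s → c s = 0)
    (t : ℕ) (ht : 1 ≤ t) (hct : c (t + 1) < c t) :
    Kostka μ ν c ≤ Kostka μ ν
      (fun s => if s = t then c t - 1 else if s = t + 1 then c (t + 1) + 1 else c s) := by
  set c' : ℕ → ℕ :=
    (fun s => if s = t then c t - 1 else if s = t + 1 then c (t + 1) + 1 else c s) with hc'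
  haveI : Finite {T : ℕ → ℕ → ℕ // IsSkewSSYT μ ν T ∧ HasContent μ ν T c'} := by
    apply finite_tabs μ ν hμ N hN c' (N + t + 2)
    intro s hs
    have h1 : s ≠ t := by omega
    have h2 : s ≠ t + 1 := by omega
    simp only [hc', if_neg h1, if_neg h2]
    exact hcN s (by omega)
  apply Nat.card_le_card_of_injective
    (fun Ts : {T : ℕ → ℕ → ℕ // IsSkewSSYT μ ν T ∧ HasContent μ ν T c} =>
      (⟨Fmap μ ν Ts.1 t N, Fmap_SSYT μ ν hμ hν N hN Ts.2.1 Ts.2.2 t ht hct,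
        Fmap_content μ ν hμ hν N hN Ts.2.1 Ts.2.2 t ht hct⟩ :
        {T : ℕ → ℕ → ℕ // IsSkewSSYT μ ν T ∧ HasContent μ ν T c'}))
  intro T₁ T₂ h
  have h' : Fmap μ ν T₁.1 t N = Fmap μ ν T₂.1 t N := congrArg Subtype.val h
  have e1 := Gmap_Fmap μ ν hμ hν N hN T₁.2.1 T₁.2.2 t ht hct
  have e2 := Gmap_Fmap μ ν hμ hν N hN T₂.2.1 T₂.2.2 t ht hct
  apply Subtype.ext
  rw [← e1, ← e2, h']

end SK

/-- if λ ⪯ λ' in the dominance order (partitions with equal sums, partial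
sums of λ' dominating those of λ), then K_{μ/ν}(λ') ≤ K_{μ/ν}(λ); in particular
K_{μ/ν}(λ') ≠ 0 implies K_{μ/ν}(λ) ≠ 0. -/
theorem stmt_8 (μ ν : ℕ → ℕ)
    (hμ : ∀ i, μ (i + 1) ≤ μ i) (hν : ∀ i, ν (i + 1) ≤ ν i)
    (hμfin : ∃ N, ∀ i, N ≤ i → μ i = 0) (hνμ : ∀ i, ν i ≤ μ i)
    (lam lam' : ℕ → ℕ)
    (hlam : ∀ t, 1 ≤ t → lam (t + 1) ≤ lam t)
    (hlam' : ∀ t, 1 ≤ t → lam' (t + 1) ≤ lam' t)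
    (hlam0 : lam 0 = 0) (hlam'0 : lam' 0 = 0)
    (hdom : ∀ k, ∑ t ∈ Finset.range (k + 1), lam t ≤ ∑ t ∈ Finset.range (k + 1), lam' t)
    (hsum : ∃ N, (∀ t, N ≤ t → lam t = 0 ∧ lam' t = 0) ∧
      ∑ t ∈ Finset.range N, lam t = ∑ t ∈ Finset.range N, lam' t) :
    Kostka μ ν lam' ≤ Kostka μ ν lam ∧ (Kostka μ ν lam' ≠ 0 → Kostka μ ν lam ≠ 0) := by
  obtain ⟨N₀, hN₀⟩ := hμfin
  obtain ⟨N₁, hN₁, hsum₁⟩ := hsum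
  set NN := max N₀ N₁ + 1 with hNN
  have hNμ : ∀ i, NN ≤ i → μ i = 0 := fun i hi => hN₀ i (by omega)
  have hNlam : ∀ s, NN ≤ s → lam s = 0 := fun s hs => (hN₁ s (by omega)).1
  have hNlam' : ∀ s, NN ≤ s → lam' s = 0 := fun s hs => (hN₁ s (by omega)).2
  have hpartial : ∀ (f : ℕ → ℕ), (∀ s, NN ≤ s → f s = 0) →
      ∀ K, NN ≤ K → ∑ s ∈ Finset.range K, f s = ∑ s ∈ Finset.range NN, f s := by
    intro f hf K hK
    symm
    apply Finset.sum_subset (Finset.range_subset_range.2 hK)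
    intro x hx hx2
    exact hf x (by simpa using hx2)
  have hext : ∀ (f : ℕ → ℕ), (∀ s, N₁ ≤ s → f s = 0) →
      ∑ s ∈ Finset.range NN, f s = ∑ s ∈ Finset.range N₁, f s := by
    intro f hf
    symm
    apply Finset.sum_subset (Finset.range_subset_range.2 (by omega))
    intro x hx hx2
    exact hf x (by simpa using hx2)
  have hNsum : ∑ s ∈ Finset.range NN, lam s = ∑ s ∈ Finset.range NN, lam' s := by
    rw [hext lam (fun s hs => (hN₁ s hs).1), hext lam' (fun s hs => (hN₁ s hs).2), hsum₁]
  have key : ∀ m : ℕ, ∀ c : ℕ → ℕ, c 0 = 0 → (∀ s, NN ≤ s → c s = 0) →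
      (∀ k, ∑ s ∈ Finset.range (k + 1), lam s ≤ ∑ s ∈ Finset.range (k + 1), c s) →
      (∑ s ∈ Finset.range NN, c s = ∑ s ∈ Finset.range NN, lam s) →
      (∑ k ∈ Finset.range NN,
        (∑ s ∈ Finset.range (k + 1), c s - ∑ s ∈ Finset.range (k + 1), lam s)) = m →
      Kostka μ ν c ≤ Kostka μ ν lam := by
    intro m
    induction m using Nat.strong_induction_on with
    | _ m IH =>
      intro c hc0 hcN hdomc hsumc hm
      by_cases hm0 : m = 0
      · -- base case : c = lam
        subst hm0
        have hzero : ∀ k ∈ Finset.range NN,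
            (∑ s ∈ Finset.range (k + 1), c s - ∑ s ∈ Finset.range (k + 1), lam s) = 0 :=
          (Finset.sum_eq_zero_iff).1 hm
        have hpeq : ∀ k, k < NN →
            ∑ s ∈ Finset.range (k + 1), c s = ∑ s ∈ Finset.range (k + 1), lam s := by
          intro k hk
          have h1 := hzero k (Finset.mem_range.2 hk)
          have h2 := hdomc k
          omega
        have hceq : c = lam := by
          funext s
          rcases Nat.lt_or_ge s NN with hs | hs
          · rcases Nat.eq_zero_or_pos s with rfl | hs1
            · rw [hc0, hlam0]
            · have e1 := hpeq s hs
              have e2 := hpeq (s - 1) (by omega)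
              have e3 : s - 1 + 1 = s := by omega
              rw [e3] at e2
              have f1 := Finset.sum_range_succ c s
              have f2 := Finset.sum_range_succ lam s
              omega
          · rw [hcN s hs, hNlam s hs]
        rw [hceq]
      · -- inductive step
        set d : ℕ → ℕ := fun k =>
          ∑ s ∈ Finset.range (k + 1), c s - ∑ s ∈ Finset.range (k + 1), lam s with hd
        have hdval : ∀ k, d k =
            ∑ s ∈ Finset.range (k + 1), c s - ∑ s ∈ Finset.range (k + 1), lam s :=
          fun k => rfl
        have hmne : ∑ k ∈ Finset.range NN, d k = m := hm
        have hdzero : ∀ k, NN - 1 ≤ k → d k = 0 := by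
          intro k hk
          have e1 := hpartial c hcN (k + 1) (by omega)
          have e2 := hpartial lam hNlam (k + 1) (by omega)
          rw [hdval, e1, e2, hsumc]
          omega
        have hex : ∃ k ∈ Finset.range NN, d k ≠ 0 := by
          by_contra hcon
          push_neg at hcon
          exact hm0 (by rw [← hmne, Finset.sum_eq_zero hcon])
        set Dmax := (Finset.range NN).sup d with hDmax
        have hDle : ∀ k, k < NN → d k ≤ Dmax :=
          fun k hk => Finset.le_sup (Finset.mem_range.2 hk)
        have hD1 : 1 ≤ Dmax := by
          obtain ⟨k, hk, hkne⟩ := hex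
          have := Finset.le_sup (f := d) hk
          omega
        have hFne : ((Finset.range NN).filter (fun k => d k = Dmax)).Nonempty := by
          obtain ⟨k, hk, hkeq⟩ := Finset.exists_mem_eq_sup (Finset.range NN)
            ⟨0, Finset.mem_range.2 (by omega)⟩ d
          exact ⟨k, Finset.mem_filter.2 ⟨hk, hkeq.symm⟩⟩
        set ts := ((Finset.range NN).filter (fun k => d k = Dmax)).max' hFne with hts
        have htsmem := Finset.max'_mem _ hFne
        rw [← hts, Finset.mem_filter, Finset.mem_range] at htsmem
        obtain ⟨htsNN, htsD⟩ := htsmem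
        have hts1 : 1 ≤ ts := by
          rcases Nat.eq_zero_or_pos ts with h | h
          · exfalso
            have : d 0 = 0 := by
              rw [hdval]
              simp [Finset.sum_range_one, hc0, hlam0]
            rw [h, this] at htsD
            omega
          · exact h
        have htsNN2 : ts + 1 < NN := by
          by_contra hcon
          push_neg at hcon
          have : d ts = 0 := hdzero ts (by omega)
          omega
        have hdnext : d (ts + 1) < Dmax := by
          have hne : d (ts + 1) ≠ Dmax := by
            intro h
            have hmem2 : ts + 1 ∈ (Finset.range NN).filter (fun k => d k = Dmax) :=
              Finset.mem_filter.2 ⟨Finset.mem_range.2 htsNN2, h⟩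
            have := Finset.le_max' _ _ hmem2
            rw [← hts] at this
            omega
          have := hDle (ts + 1) htsNN2
          omega
        have hdprev : d (ts - 1) ≤ Dmax := hDle (ts - 1) (by omega)
        -- key strict inequality
        have hcc : c (ts + 1) < c ts := by
          have f1 := Finset.sum_range_succ c ts
          have f2 := Finset.sum_range_succ c (ts + 1)
          have f3 := Finset.sum_range_succ lam ts
          have f4 := Finset.sum_range_succ lam (ts + 1)
          have i1 : ∑ s ∈ Finset.range ts, lam s ≤ ∑ s ∈ Finset.range ts, c s := by
            have := hdomc (ts - 1)
            have e3 : ts - 1 + 1 = ts := by omega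
            rwa [e3] at this
          have i2 := hdomc ts
          have i3 := hdomc (ts + 1)
          have g1 := hdval ts
          have g2 := hdval (ts + 1)
          have g3 : d (ts - 1) =
              ∑ s ∈ Finset.range ts, c s - ∑ s ∈ Finset.range ts, lam s := by
            have := hdval (ts - 1)
            have e3 : ts - 1 + 1 = ts := by omega
            rwa [e3] at this
          have hmono := hlam ts hts1
          omega
        -- the moved content
        set c2 : ℕ → ℕ := fun s =>
          if s = ts then c ts - 1 else if s = ts + 1 then c (ts + 1) + 1 else c s with hc2
        have hc2val : ∀ s, c2 s =
            if s = ts then c ts - 1 else if s = ts + 1 then c (ts + 1) + 1 else c s :=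
          fun s => rfl
        have hstep : Kostka μ ν c ≤ Kostka μ ν c2 :=
          SK.step_le μ ν hμ hν NN hNμ c hcN ts hts1 hcc
        -- partial sums of c2
        have hSlow : ∀ K, K ≤ ts → ∑ s ∈ Finset.range K, c2 s = ∑ s ∈ Finset.range K, c s := by
          intro K hK
          apply Finset.sum_congr rfl
          intro x hx
          have hxK := Finset.mem_range.1 hx
          rw [hc2val, if_neg (by omega), if_neg (by omega)]
        have hSmid : ∑ s ∈ Finset.range (ts + 1), c2 s + 1 = ∑ s ∈ Finset.range (ts + 1), c s := by
          have f1 := Finset.sum_range_succ c2 ts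
          have f2 := Finset.sum_range_succ c ts
          have f3 := hSlow ts le_rfl
          have f4 : c2 ts = c ts - 1 := by rw [hc2val, if_pos rfl]
          omega
        have hShigh : ∀ K, ts + 2 ≤ K →
            ∑ s ∈ Finset.range K, c2 s = ∑ s ∈ Finset.range K, c s := by
          intro K hK
          induction K, hK using Nat.le_induction with
          | base =>
            have f1 := Finset.sum_range_succ c2 (ts + 1)
            have f2 := Finset.sum_range_succ c (ts + 1)
            have e12 : ts + 1 + 1 = ts + 2 := by omega
            rw [e12] at f1 f2
            have f3 : c2 (ts + 1) = c (ts + 1) + 1 := by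
              rw [hc2val, if_neg (by omega), if_pos rfl]
            omega
          | succ K hK ih =>
            have f1 := Finset.sum_range_succ c2 K
            have f2 := Finset.sum_range_succ c K
            have f3 : c2 K = c K := by rw [hc2val, if_neg (by omega), if_neg (by omega)]
            omega
        have hdomc2 : ∀ k, ∑ s ∈ Finset.range (k + 1), lam s ≤ ∑ s ∈ Finset.range (k + 1), c2 s := by
          intro k
          rcases Nat.lt_or_ge k ts with h | h
          · rw [hSlow (k + 1) (by omega)]
            exact hdomc k
          · rcases Nat.eq_or_lt_of_le h with heq | h2
            · rw [← heq]
              have g1 := hdval ts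
              have i2 := hdomc ts
              have := hSmid
              omega
            · rw [hShigh (k + 1) (by omega)]
              exact hdomc k
        have hsumc2 : ∑ s ∈ Finset.range NN, c2 s = ∑ s ∈ Finset.range NN, lam s := by
          rw [hShigh NN (by omega)]
          exact hsumc
        have hc20 : c2 0 = 0 := by
          rw [hc2val, if_neg (by omega), if_neg (by omega)]
          exact hc0
        have hc2N : ∀ s, NN ≤ s → c2 s = 0 := by
          intro s hs
          rw [hc2val, if_neg (by omega), if_neg (by omega)]
          exact hcN s hs
        -- measure decreases
        have hmeas : (∑ k ∈ Finset.range NN,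
            (∑ s ∈ Finset.range (k + 1), c2 s - ∑ s ∈ Finset.range (k + 1), lam s)) < m := by
          rw [← hmne]
          apply Finset.sum_lt_sum
          · intro k hk
            rcases Nat.lt_or_ge k ts with h | h
            · rw [hSlow (k + 1) (by omega), hdval]
            · rcases Nat.eq_or_lt_of_le h with heq | h2
              · rw [← heq]
                have g1 := hdval ts
                have i2 := hdomc ts
                have := hSmid
                omega
              · rw [hShigh (k + 1) (by omega), hdval]
          · refine ⟨ts, Finset.mem_range.2 htsNN, ?_⟩
            have g1 := hdval ts
            have i2 := hdomc ts
            omega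
        exact le_trans hstep (IH _ hmeas c2 hc20 hc2N hdomc2 hsumc2 rfl)
  have hmain : Kostka μ ν lam' ≤ Kostka μ ν lam :=
    key _ lam' hlam'0 hNlam' hdom hNsum.symm rfl
  exact ⟨hmain, fun h => by omega⟩
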